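/- For every x in [0,1] and every natural number i > 0, ∫_{2/3^i}^{(2+x)/3^i} f(t) dt = (2^(i-1) / 9^i) · x + (2/9)^i · ∫_0^x f(t) dt. -/
import Mathlib


open intervalIntegral Set

theorem bourbaki_stmt (f : ℝ → ℝ)
    (hcont : ContinuousOn f (Set.Icc 0 1))
    (h0 : f 0 = 0) (h1 : f 1 = 1)
    (hw1 : ∀ x ∈ Set.Icc (0:ℝ) 1, f (x / 3) = (2/3) * f x)
    (hw2 : ∀ x ∈ Set.Icc (0:ℝ) 1, f ((2 - x) / 3) = (1/3) * (1 + f x))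
    (hw3 : ∀ x ∈ Set.Icc (0:ℝ) 1, f ((2 + x) / 3) = 1/3 + (2/3) * f x) :
    ∀ x ∈ Set.Icc (0:ℝ) 1, ∀ i : ℕ, 0 < i → ∫ t in (2 / 3 ^ i)..((2 + x) / 3 ^ i), f t = (2 ^ (i - 1) / 9 ^ i) * x + (2/9) ^ i * ∫ t in (0:ℝ)..x, f t := by
  have hInt : ∀ a b : ℝ, a ∈ Set.Icc (0:ℝ) 1 → b ∈ Set.Icc (0:ℝ) 1 →
      IntervalIntegrable f MeasureTheory.volume a b := by
    intro a b ha hb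
    refine (hcont.mono ?_).intervalIntegrable
    rw [← Set.uIcc_of_le (zero_le_one (α := ℝ))]
    exact Set.uIcc_subset_uIcc ((Set.uIcc_of_le (zero_le_one (α := ℝ))) ▸ ha)
      ((Set.uIcc_of_le (zero_le_one (α := ℝ))) ▸ hb)
  intro x hx i hi
  obtain ⟨hx0, hx1⟩ := hx
  induction i with
  | zero => omega
  | succ n ih =>
    rcases Nat.eq_zero_or_pos n with hn | hn
    · subst hn
      -- base case i = 1
      have key : (∫ s in (0:ℝ)..x, f ((1/3) * s + 2/3)) =
          (1/3 : ℝ)⁻¹ • ∫ t in ((1/3) * 0 + 2/3 : ℝ)..((1/3) * x + 2/3), f t :=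
        integral_comp_mul_add f (by norm_num) (2/3)
      have hcongr : (∫ s in (0:ℝ)..x, f ((1/3) * s + 2/3)) =
          ∫ s in (0:ℝ)..x, (1/3 + (2/3) * f s) := by
        apply intervalIntegral.integral_congr
        intro s hs
        rw [Set.uIcc_of_le hx0] at hs
        have hs1 : s ∈ Set.Icc (0:ℝ) 1 := ⟨hs.1, hs.2.trans hx1⟩
        show f ((1/3 : ℝ) * s + 2/3) = 1/3 + (2/3) * f s
        have harg : (1/3 : ℝ) * s + 2/3 = (2 + s) / 3 := by ring
        rw [harg, hw3 s hs1]
      have hfs : (∫ s in (0:ℝ)..x, (1/3 + (2/3) * f s)) =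
          (1/3) * x + (2/3) * ∫ t in (0:ℝ)..x, f t := by
        rw [intervalIntegral.integral_add (intervalIntegrable_const)
            ((hInt 0 x ⟨le_refl _, zero_le_one⟩ ⟨hx0, hx1⟩).const_mul _),
          intervalIntegral.integral_const, intervalIntegral.integral_const_mul]
        simp [mul_comm]
      have harg1 : ((1/3 : ℝ) * 0 + 2/3) = 2 / 3 ^ 1 := by norm_num
      have harg2 : ((1/3 : ℝ) * x + 2/3) = (2 + x) / 3 ^ 1 := by ring
      rw [harg1, harg2, hcongr, hfs, smul_eq_mul] at key
      have h3 : (∫ t in (2 / 3 ^ 1 : ℝ)..((2 + x) / 3 ^ 1), f t) =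
          (1/3 : ℝ) * ((1/3) * x + (2/3) * ∫ t in (0:ℝ)..x, f t) := by
        norm_num at key ⊢; linarith
      rw [h3]; norm_num; ring
    · -- inductive step, n ≥ 1
      have ihn := ih hn
      have h3n' : (0:ℝ) < 3 ^ n := by positivity
      have h3ge : (3:ℝ) ≤ 3 ^ n := by
        calc (3:ℝ) = 3 ^ 1 := (pow_one 3).symm
        _ ≤ 3 ^ n := pow_le_pow_right₀ (by norm_num) hn
      have hmem : ∀ s ∈ Set.uIcc (2 / 3 ^ n : ℝ) ((2 + x) / 3 ^ n),
          s ∈ Set.Icc (0:ℝ) 1 := by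
        intro s hs
        have hle : (2 / 3 ^ n : ℝ) ≤ (2 + x) / 3 ^ n := by gcongr; linarith
        rw [Set.uIcc_of_le hle] at hs
        refine ⟨?_, ?_⟩
        · have : (0:ℝ) ≤ 2 / 3 ^ n := by positivity
          linarith [hs.1]
        · have : ((2 + x) : ℝ) / 3 ^ n ≤ 1 := by
            rw [div_le_one h3n']; linarith
          linarith [hs.2]
      have key := integral_comp_div (a := 2 / 3 ^ n) (b := (2 + x) / 3 ^ n)
        (c := 3) f (by norm_num)
      have hcongr : (∫ s in (2 / 3 ^ n : ℝ)..((2 + x) / 3 ^ n), f (s / 3)) =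
          (2/3) * ∫ s in (2 / 3 ^ n : ℝ)..((2 + x) / 3 ^ n), f s := by
        rw [← intervalIntegral.integral_const_mul]
        exact intervalIntegral.integral_congr fun s hs => hw1 s (hmem s hs)
      have hend1 : ((2:ℝ) / 3 ^ n) / 3 = 2 / 3 ^ (n + 1) := by rw [pow_succ]; ring
      have hend2 : (((2:ℝ) + x) / 3 ^ n) / 3 = (2 + x) / 3 ^ (n + 1) := by
        rw [pow_succ]; ring
      rw [hend1, hend2, hcongr, ihn, smul_eq_mul] at key
      have h3 : (∫ t in (2 / 3 ^ (n + 1) : ℝ)..((2 + x) / 3 ^ (n + 1)), f t) =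
          (1/3) * ((2/3) * ((2 ^ (n - 1) / 9 ^ n) * x +
            (2/9) ^ n * ∫ t in (0:ℝ)..x, f t)) := by linarith
      have h2 : (2:ℝ) ^ (n - 1) * 2 = 2 ^ n := by
        rw [← pow_succ]; congr 1; omega
      rw [h3]
      simp only [Nat.add_sub_cancel]
      rw [pow_succ (9:ℝ) n, pow_succ ((2:ℝ)/9) n, ← h2]
      ring
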